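/- Every closed hyperplane X = ker f of c₀ (with f ∈ c₀* nonzero) admits an Auerbach basis: a biorthogonal system (xₙ; xₙ*)_{n≥1} with xₙ ∈ X, xₙ* ∈ X*, ‖xₙ‖ = ‖xₙ*‖ = 1 for all n, which is fundamental (the closed span of {xₙ} is X) and total (xₙ*(y) = 0 for all n implies y = 0). -/

import Mathlib

open ZeroAtInftyContinuousMap Filter
open scoped ZeroAtInfty
open scoped Topology

/-- The `k`-th standard unit vector `e_k` in `c₀` (indices starting at `0`). -/
noncomputable def e (k : ℕ) : C₀(ℕ, ℝ) where
  toFun := Pi.single k 1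
  zero_at_infty' := by
    refine Filter.Tendsto.congr' ?_ tendsto_const_nhds
    have h : {k}ᶜ ∈ Filter.cocompact ℕ := by
      rw [Filter.cocompact_eq_cofinite]
      simp [Filter.mem_cofinite]
    filter_upwards [h] with n hn
    simp only [Set.mem_compl_iff, Set.mem_singleton_iff] at hn
    simp [Pi.single_apply, hn]

/-- The `k`-th coordinate functional `e_k^*` on `c₀`. -/
noncomputable def coord (k : ℕ) : C₀(ℕ, ℝ) →L[ℝ] ℝ :=
  LinearMap.mkContinuous
    { toFun := fun y => y k
      map_add' := by intros; rfl
      map_smul' := by intros; rfl }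
    1
    (fun y => by simpa using y.toBCF.norm_coe_le_norm k)

/-- The functional `f = ∑ₙ aₙ eₙ^* ∈ ℓ¹ = c₀^*` determined by a (summable) coefficient
sequence `a`. -/
noncomputable def funcOf (a : ℕ → ℝ) : C₀(ℕ, ℝ) →L[ℝ] ℝ := ∑' n : ℕ, a n • coord n

/-- The vectors `xₙ = e_{n+1} - (a_{n+1}/a₀) • e₀` (here `a₀` plays the role of the
coefficient of maximal absolute value, i.e. the paper's `a₁`). -/
noncomputable def xvec (a : ℕ → ℝ) (n : ℕ) : C₀(ℕ, ℝ) :=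
  e (n + 1) - (a (n + 1) / a 0) • e 0

lemma e_apply (k m : ℕ) : e k m = if m = k then 1 else 0 := by
  simp [e, Pi.single_apply]

lemma coord_apply (k : ℕ) (y : C₀(ℕ, ℝ)) : coord k y = y k := rfl

lemma norm_coord_le (k : ℕ) : ‖coord k‖ ≤ 1 :=
  LinearMap.mkContinuous_norm_le _ zero_le_one _

lemma abs_apply_le_norm (y : C₀(ℕ, ℝ)) (k : ℕ) : |y k| ≤ ‖y‖ := by
  simpa using y.toBCF.norm_coe_le_norm k

lemma norm_le_of_forall (y : C₀(ℕ, ℝ)) (C : ℝ) (hC : 0 ≤ C) (h : ∀ m, |y m| ≤ C) : ‖y‖ ≤ C := by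
  rw [← norm_toBCF_eq_norm]
  exact BoundedContinuousFunction.norm_le hC |>.2 h

lemma sum_smul_e_apply (S : Finset ℕ) (c : ℕ → ℝ) (m : ℕ) :
    (∑ n ∈ S, c n • e n) m = if m ∈ S then c m else 0 := by
  rw [← coord_apply, map_sum]
  simp only [map_smul, coord_apply, e_apply, smul_eq_mul, mul_ite, mul_one, mul_zero]
  rw [Finset.sum_ite_eq S m c]

lemma hasSum_e (y : C₀(ℕ, ℝ)) : HasSum (fun n => y n • e n) y := by
  rw [HasSum, SummationFilter.unconditional_filter, Metric.tendsto_atTop]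
  intro ε hε
  have h0 : Tendsto y (cocompact ℕ) (𝓝 0) := y.zero_at_infty'
  rw [Filter.cocompact_eq_cofinite] at h0
  have h1 : {m | ¬ |y m| < ε/2}.Finite := by
    have := h0.eventually (Metric.ball_mem_nhds (0:ℝ) (by positivity : (0:ℝ) < ε/2))
    rw [Filter.eventually_cofinite] at this
    convert this using 2
    simp [Real.dist_eq]
  refine ⟨h1.toFinset, fun S hS => ?_⟩
  rw [dist_eq_norm]
  have : ‖∑ n ∈ S, y n • e n - y‖ ≤ ε/2 := by
    apply norm_le_of_forall _ _ (by positivity)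
    intro m
    have : (∑ n ∈ S, y n • e n - y) m = (if m ∈ S then y m else 0) - y m := by
      rw [← sum_smul_e_apply S y m]; rfl
    rw [this]
    by_cases hm : m ∈ S
    · simp [hm]; positivity
    · rw [if_neg hm, zero_sub, abs_neg]
      by_contra hc
      exact hm (hS (h1.mem_toFinset.2 (by simp only [Set.mem_setOf_eq]; push_neg; linarith)))
  linarith

lemma norm_fun_one {E : Type*} [NormedAddCommGroup E] [NormedSpace ℝ E]
    (g : E →L[ℝ] ℝ) (x : E) (h1 : g x = 1) (hx : ‖x‖ = 1)
    (hb : ∀ z, |g z| ≤ ‖z‖) : ‖g‖ = 1 := by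
  refine le_antisymm (g.opNorm_le_bound zero_le_one (fun z => by simpa using hb z)) ?_
  have h2 := g.unit_le_opNorm x (le_of_eq hx)
  rw [h1] at h2
  simpa using h2

lemma span_dense_of_forall_eps {E : Type*} [NormedAddCommGroup E] [NormedSpace ℝ E]
    (x : ℕ → E)
    (h : ∀ z : E, ∀ ε : ℝ, 0 < ε → ∃ v ∈ Submodule.span ℝ (Set.range x), ‖v - z‖ < ε) :
    (Submodule.span ℝ (Set.range x)).topologicalClosure = ⊤ := by
  rw [eq_top_iff]
  intro z _
  rw [← SetLike.mem_coe, Submodule.topologicalClosure_coe]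
  rw [Metric.mem_closure_iff]
  intro ε hε
  obtain ⟨v, hv, hvz⟩ := h z ε hε
  exact ⟨v, hv, by rwa [dist_comm, dist_eq_norm]⟩

/-- An Auerbach basis of a normed space: a biorthogonal system of norm-one vectors and
norm-one functionals which is fundamental (the closed linear span of the vectors is the
whole space) and total (the functionals separate points). -/
structure IsAuerbachBasis {X : Type*} [NormedAddCommGroup X] [NormedSpace ℝ X]
    {ι : Type*} (x : ι → X) (f : ι → X →L[ℝ] ℝ) : Prop where
  biorth_eq : ∀ k, f k (x k) = 1
  biorth_ne : ∀ k j, k ≠ j → f k (x j) = 0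
  norm_vec : ∀ n, ‖x n‖ = 1
  norm_fun : ∀ n, ‖f n‖ = 1
  fundamental : (Submodule.span ℝ (Set.range x)).topologicalClosure = ⊤
  total : ∀ y, (∀ n, f n y = 0) → y = 0

set_option maxHeartbeats 1000000 in
/-- Every closed hyperplane `X = ker f` of `c₀` (where `f` is a nonzero
continuous functional) admits an Auerbach basis. -/
theorem stmt4 (f : C₀(ℕ, ℝ) →L[ℝ] ℝ) (hf : f ≠ 0) :
    ∃ (x : ℕ → LinearMap.ker (f : C₀(ℕ, ℝ) →ₗ[ℝ] ℝ))
      (g : ℕ → (LinearMap.ker (f : C₀(ℕ, ℝ) →ₗ[ℝ] ℝ) : Submodule ℝ C₀(ℕ, ℝ)) →L[ℝ] ℝ),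
      IsAuerbachBasis x g := by
  classical
  obtain ⟨a, ha⟩ : ∃ a : ℕ → ℝ, ∀ n, a n = f (e n) := ⟨_, fun _ => rfl⟩
  -- representation of f
  have hrep : ∀ y : C₀(ℕ, ℝ), HasSum (fun n => a n * y n) (f y) := by
    intro y
    have h1 := f.hasSum (hasSum_e y)
    simp only [map_smul, smul_eq_mul] at h1
    refine h1.congr_fun fun n => ?_
    rw [ha, mul_comm]
  -- existence of a nonzero coefficient
  have hex : ∃ n, a n ≠ 0 := by
    by_contra h
    push_neg at h
    apply hf
    ext y
    have h1 := hrep y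
    simp only [h, zero_mul] at h1
    simpa using h1.unique hasSum_zero
  obtain ⟨n₀, hn₀⟩ := hex
  -- summability of |a|
  have hsum : Summable (fun n => |a n|) := by
    apply summable_of_sum_range_le (fun n => abs_nonneg _)
    intro N
    obtain ⟨sg, hsg⟩ : ∃ sg : ℕ → ℝ, ∀ n, sg n = if a n < 0 then -1 else 1 := ⟨_, fun _ => rfl⟩
    obtain ⟨v, hv⟩ : ∃ v : C₀(ℕ, ℝ), v = ∑ n ∈ Finset.range N, sg n • e n := ⟨_, rfl⟩
    have hnv : ‖v‖ ≤ 1 := by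
      apply norm_le_of_forall _ _ zero_le_one
      intro m
      rw [hv, sum_smul_e_apply]
      split_ifs
      · rw [hsg]; split_ifs <;> norm_num
      · norm_num
    have hfv : f v = ∑ n ∈ Finset.range N, |a n| := by
      rw [hv, map_sum]
      refine Finset.sum_congr rfl fun n _ => ?_
      rw [map_smul]
      simp only [smul_eq_mul, hsg, ← ha]
      rcases lt_or_ge (a n) 0 with h | h
      · rw [if_pos h, abs_of_neg h]; ring
      · rw [if_neg (not_lt.2 h), abs_of_nonneg h]; ring
    calc ∑ n ∈ Finset.range N, |a n| = f v := hfv.symm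
      _ ≤ |f v| := le_abs_self _
      _ ≤ ‖f‖ * ‖v‖ := f.le_opNorm v
      _ ≤ ‖f‖ * 1 := by gcongr
      _ = ‖f‖ := mul_one _
  -- the index of a maximal coefficient
  have htend : Tendsto (fun n => |a n|) atTop (𝓝 0) := hsum.tendsto_atTop_zero
  have hfin : {n | |a n₀| ≤ |a n|}.Finite := by
    rw [← Nat.cofinite_eq_atTop] at htend
    have := htend.eventually (eventually_lt_nhds (abs_pos.2 hn₀))
    rw [eventually_cofinite] at this
    exact this.subset fun n hn => by simp only [Set.mem_setOf_eq] at hn ⊢; linarith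
  obtain ⟨k₀, hk₀mem, hk₀max⟩ := Finset.exists_max_image hfin.toFinset (fun n => |a n|)
    ⟨n₀, hfin.mem_toFinset.2 (by simp)⟩
  have hk₀big : |a n₀| ≤ |a k₀| := hfin.mem_toFinset.1 hk₀mem
  have hmax : ∀ m, |a m| ≤ |a k₀| := by
    intro m
    by_cases hm : |a n₀| ≤ |a m|
    · exact hk₀max m (hfin.mem_toFinset.2 hm)
    · push_neg at hm; linarith
  have hk₀ : a k₀ ≠ 0 := by
    intro h
    rw [h, abs_zero] at hk₀big
    exact hn₀ (abs_eq_zero.1 (le_antisymm hk₀big (abs_nonneg _)))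
  -- the reindexing ℕ ≃ ℕ \ {k₀}
  obtain ⟨r, hrdef⟩ : ∃ r : ℕ → ℕ, ∀ n, r n = if n < k₀ then n else n + 1 := ⟨_, fun _ => rfl⟩
  have hrne : ∀ n, r n ≠ k₀ := by
    intro n; rw [hrdef]; split_ifs with h <;> omega
  have hrinj : Function.Injective r := by
    intro i j hij
    rw [hrdef, hrdef] at hij
    split_ifs at hij <;> omega
  have hrsurj : ∀ m, m ≠ k₀ → ∃ n, r n = m := by
    intro m hm
    rcases lt_or_gt_of_ne hm with h | h
    · exact ⟨m, by rw [hrdef, if_pos h]⟩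
    · exact ⟨m - 1, by rw [hrdef]; split_ifs <;> omega⟩
  -- the basis vectors (in the ambient space)
  obtain ⟨xx, hxxdef⟩ : ∃ xx : ℕ → C₀(ℕ, ℝ), ∀ m, xx m = e m - (a m / a k₀) • e k₀ :=
    ⟨_, fun _ => rfl⟩
  have hxxker : ∀ m, xx m ∈ LinearMap.ker (f : C₀(ℕ, ℝ) →ₗ[ℝ] ℝ) := by
    intro m
    rw [LinearMap.mem_ker, ContinuousLinearMap.coe_coe, hxxdef, map_sub, map_smul]
    rw [← ha, ← ha]
    rw [smul_eq_mul, div_mul_cancel₀ _ hk₀, sub_self]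
  have hxxapp : ∀ m j, xx m j =
      (if j = m then 1 else 0) - (a m / a k₀) * (if j = k₀ then 1 else 0) := by
    intro m j
    rw [hxxdef]
    rw [ZeroAtInftyContinuousMap.sub_apply, ZeroAtInftyContinuousMap.smul_apply, e_apply, e_apply]
    simp
  obtain ⟨X, hXdef⟩ : ∃ X : ℕ → LinearMap.ker (f : C₀(ℕ, ℝ) →ₗ[ℝ] ℝ), ∀ n, (X n : C₀(ℕ, ℝ)) = xx (r n) :=
    ⟨fun n => ⟨xx (r n), hxxker (r n)⟩, fun _ => rfl⟩
  obtain ⟨g, hgapp⟩ : ∃ g : ℕ → (LinearMap.ker (f : C₀(ℕ, ℝ) →ₗ[ℝ] ℝ) : Submodule ℝ C₀(ℕ, ℝ)) →L[ℝ] ℝ,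
      ∀ n (z : LinearMap.ker (f : C₀(ℕ, ℝ) →ₗ[ℝ] ℝ)), g n z = (z : C₀(ℕ, ℝ)) (r n) :=
    ⟨fun n => (coord (r n)).comp (LinearMap.ker (f : C₀(ℕ, ℝ) →ₗ[ℝ] ℝ)).subtypeL, fun _ _ => rfl⟩
  -- biorthogonality
  have hbi_eq : ∀ k, g k (X k) = 1 := by
    intro k
    rw [hgapp, hXdef, hxxapp, if_pos rfl, if_neg (hrne k)]
    ring
  have hbi_ne : ∀ k j, k ≠ j → g k (X j) = 0 := by
    intro k j hkj
    rw [hgapp, hXdef, hxxapp, if_neg (show r k ≠ r j from fun h => hkj (hrinj h)),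
      if_neg (hrne k)]
    ring
  -- norm of the vectors
  have hnv : ∀ n, ‖X n‖ = 1 := by
    intro n
    have h1 : ‖X n‖ = ‖xx (r n)‖ := by rw [← hXdef]; rfl
    rw [h1]
    apply le_antisymm
    · apply norm_le_of_forall _ _ zero_le_one
      intro m
      rw [hxxapp]
      rcases eq_or_ne m (r n) with h | h
      · rw [if_pos h, if_neg (h ▸ hrne n)]
        norm_num
      · rw [if_neg h]
        rcases eq_or_ne m k₀ with h2 | h2
        · rw [if_pos h2]
          rw [abs_sub_comm]
          simp only [sub_zero, mul_one, abs_neg, abs_div]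
          rw [div_le_one (abs_pos.2 hk₀)]
          exact hmax _
        · rw [if_neg h2]; norm_num
    · have h2 := abs_apply_le_norm (xx (r n)) (r n)
      rw [hxxapp, if_pos rfl, if_neg (hrne n)] at h2
      simpa using h2
  -- totality
  have htotal : ∀ z : LinearMap.ker (f : C₀(ℕ, ℝ) →ₗ[ℝ] ℝ), (∀ n, g n z = 0) → z = 0 := by
    intro z hz
    have hy : f (z : C₀(ℕ, ℝ)) = 0 := z.2
    have hz' : ∀ m, m ≠ k₀ → (z : C₀(ℕ, ℝ)) m = 0 := by
      intro m hm
      obtain ⟨n, rfl⟩ := hrsurj m hm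
      rw [← hgapp]
      exact hz n
    have h1 : HasSum (fun n => a n * (z : C₀(ℕ, ℝ)) n) 0 := hy ▸ hrep _
    have h2 : HasSum (fun n => if n = k₀ then a k₀ * (z : C₀(ℕ, ℝ)) k₀ else 0)
        (a k₀ * (z : C₀(ℕ, ℝ)) k₀) := hasSum_ite_eq k₀ _
    have h3 : (fun n => a n * (z : C₀(ℕ, ℝ)) n) =
        fun n => if n = k₀ then a k₀ * (z : C₀(ℕ, ℝ)) k₀ else 0 := by
      funext n
      rcases eq_or_ne n k₀ with h | h
      · rw [if_pos h, h]
      · rw [if_neg h, hz' n h, mul_zero]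
    rw [h3] at h1
    have h4 := h1.unique h2
    have h5 : (z : C₀(ℕ, ℝ)) k₀ = 0 := by
      rcases mul_eq_zero.1 h4.symm with h | h
      · exact absurd h hk₀
      · exact h
    have h6 : (z : C₀(ℕ, ℝ)) = 0 := by
      ext m
      rcases eq_or_ne m k₀ with h | h
      · rw [h]; exact h5
      · exact hz' m h
    exact Subtype.ext h6
  refine ⟨X, g, hbi_eq, hbi_ne, hnv, ?_, ?_, htotal⟩
  -- norm of the functionals
  · intro n
    refine norm_fun_one _ (X n) (hbi_eq n) (hnv n) ?_
    intro z
    rw [hgapp]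
    exact abs_apply_le_norm (z : C₀(ℕ, ℝ)) (r n)
  -- fundamentality
  · refine span_dense_of_forall_eps X ?_
    rintro ⟨y, hy'⟩ ε hε
    have hy : f y = 0 := hy'
    obtain ⟨w, hwdef⟩ : ∃ w : ℕ → C₀(ℕ, ℝ), ∀ m, w m = if m = k₀ then 0 else y m • xx m :=
      ⟨_, fun _ => rfl⟩
    have hwker : ∀ m, w m ∈ LinearMap.ker (f : C₀(ℕ, ℝ) →ₗ[ℝ] ℝ) := by
      intro m
      rw [hwdef]
      split_ifs
      · exact zero_mem _
      · exact Submodule.smul_mem _ _ (hxxker m)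
    have hwsum : HasSum w y := by
      have h1 : HasSum (fun n => y n • e n) y := hasSum_e y
      have h2 : HasSum (fun n => if n = k₀ then 0 else y n • e n) (y - y k₀ • e k₀) :=
        hasSum_ite_sub_hasSum h1 k₀
      have h3 : HasSum (fun n => a n * y n) 0 := hy ▸ hrep _
      have h4 : HasSum (fun n => if n = k₀ then 0 else a n * y n) (0 - a k₀ * y k₀) :=
        hasSum_ite_sub_hasSum h3 k₀
      have h5 : HasSum (fun n => ((if n = k₀ then 0 else a n * y n) / a k₀) • e k₀)
          (((0 - a k₀ * y k₀) / a k₀) • e k₀) := (h4.div_const (a k₀)).smul_const (e k₀)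
      have h6 := h2.sub h5
      have h7 : ((0 - a k₀ * y k₀) / a k₀) = - y k₀ := by
        rw [zero_sub, neg_div, mul_comm, mul_div_assoc, div_self hk₀, mul_one]
      rw [h7] at h6
      have h8 : y - y k₀ • e k₀ - (- y k₀) • e k₀ = y := by module
      rw [h8] at h6
      refine h6.congr_fun fun n => ?_
      rcases eq_or_ne n k₀ with h | h
      · rw [if_pos h, if_pos h, hwdef, if_pos h]
        simp
      · rw [if_neg h, if_neg h, hwdef, if_neg h, hxxdef]
        module
    obtain ⟨W, hWdef⟩ : ∃ W : ℕ → LinearMap.ker (f : C₀(ℕ, ℝ) →ₗ[ℝ] ℝ), ∀ m, (W m : C₀(ℕ, ℝ)) = w m :=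
      ⟨fun m => ⟨w m, hwker m⟩, fun _ => rfl⟩
    have hWspan : ∀ m, W m ∈ Submodule.span ℝ (Set.range X) := by
      intro m
      rcases eq_or_ne m k₀ with h | h
      · have h0 : W m = 0 := by
          apply Subtype.ext
          rw [hWdef, hwdef, if_pos h]
          rfl
        rw [h0]; exact zero_mem _
      · obtain ⟨n, rfl⟩ := hrsurj m h
        have h0 : W (r n) = y (r n) • X n := by
          apply Subtype.ext
          rw [hWdef, hwdef, if_neg h, Submodule.coe_smul, hXdef]
        rw [h0]
        exact Submodule.smul_mem _ _ (Submodule.subset_span ⟨n, rfl⟩)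
    obtain ⟨S₀, hS₀⟩ := Metric.tendsto_atTop.mp hwsum ε hε
    refine ⟨∑ m ∈ S₀, W m, Submodule.sum_mem _ (fun m _ => hWspan m), ?_⟩
    have hcoe : ((∑ m ∈ S₀, W m - (⟨y, hy'⟩ : LinearMap.ker (f : C₀(ℕ, ℝ) →ₗ[ℝ] ℝ)) : LinearMap.ker (f : C₀(ℕ, ℝ) →ₗ[ℝ] ℝ)) : C₀(ℕ, ℝ))
        = (∑ m ∈ S₀, w m) - y := by
      push_cast
      rw [Finset.sum_congr rfl fun m _ => hWdef m]
    have hnrm : ‖(∑ m ∈ S₀, W m : LinearMap.ker (f : C₀(ℕ, ℝ) →ₗ[ℝ] ℝ)) - ⟨y, hy'⟩‖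
        = ‖((∑ m ∈ S₀, W m - (⟨y, hy'⟩ : LinearMap.ker (f : C₀(ℕ, ℝ) →ₗ[ℝ] ℝ)) : LinearMap.ker (f : C₀(ℕ, ℝ) →ₗ[ℝ] ℝ)) : C₀(ℕ, ℝ))‖ := rfl
    rw [hnrm, hcoe, ← dist_eq_norm]
    exact hS₀ S₀ le_rfl
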